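/- Let $k, N, d$ be positive integers with $N \geq d+1$, and let $A_{d,N} = \{0, e_2, \dots, e_d\} \cup \{e_1, 2e_1, \dots, (N-d)e_1\} \subset \mathbb{Z}^d$. Then $|kA_{d,N}| = \binom{k+d-1}{d}(N-d) + \binom{k+d-1}{d-1}$. -/

import Mathlib

open scoped Pointwise

open Finset

lemma hockey (n c : ℕ) : ∑ b ∈ range (n+1), (b+c).choose c = (n+c+1).choose (c+1) := by
  induction n with
  | zero => simp
  | succ n ih =>
    rw [Finset.sum_range_succ, ih, show n+1+c+1 = (n+c+1)+1 from by omega,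
      Nat.choose_succ_succ' (n+c+1) c, show n+1+c = n+c+1 from by omega]
    omega

lemma card_pa {ι : Type*} [DecidableEq ι] :
    ∀ (c : ℕ) (s : Finset ι), s.card = c + 1 → ∀ n, (s.piAntidiag n).card = (n + c).choose c := by
  intro c
  induction c with
  | zero =>
    intro s hs n
    rw [Finset.card_eq_one] at hs
    obtain ⟨i, rfl⟩ := hs
    have : ({i} : Finset ι).piAntidiag n = {fun j => if j = i then n else 0} := by
      ext f
      simp only [mem_piAntidiag, Finset.sum_singleton, Finset.mem_singleton]
      constructor
      · rintro ⟨h1, h2⟩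
        funext j
        by_cases hj : j = i
        · simp [hj, h1]
        · simp only [hj, if_false]
          by_contra hne
          exact hj (h2 j hne)
      · rintro rfl
        refine ⟨by simp, fun j hj => ?_⟩
        by_contra hne
        simp [hne] at hj
    simp [this]
  | succ c ih =>
    intro s hs n
    obtain ⟨i, t, hi, rfl, ht⟩ := Finset.card_eq_succ.mp hs
    rw [← Finset.cons_eq_insert _ _ hi, Finset.piAntidiag_cons, Finset.card_disjiUnion]
    simp only [Finset.card_map]
    rw [Finset.sum_congr rfl (fun p _ => ih t ht p.2),
      Finset.Nat.sum_antidiagonal_eq_sum_range_succ_mk]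
    have := Finset.sum_range_reflect (fun b => (b + c).choose c) (n+1)
    simp only [Nat.add_sub_cancel] at this
    calc ∑ k ∈ range (n+1), (n - k + c).choose c
        = ∑ k ∈ range (n+1), (k + c).choose c := this
      _ = (n + c + 1).choose (c+1) := hockey n c
      _ = (n + (c+1)).choose (c+1) := by rw [Nat.add_assoc]

lemma hsum_split {d : ℕ} (i0 : Fin d) (h : Fin d → ℕ) :
    ∑ j, h j = h i0 + ∑ j ∈ univ.erase i0, h j :=
  (Finset.add_sum_erase univ h (mem_univ i0)).symm

lemma sum_coord {d : ℕ} (i0 : Fin d) (c k : ℕ) (hdc : d = c + 1)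
    (card_pa : ∀ n, ((Finset.univ : Finset (Fin d)).piAntidiag n).card = (n + c).choose c) :
    ∑ h ∈ (Finset.univ : Finset (Fin d)).piAntidiag k, h i0 = (k + c).choose (c + 1) := by
  set W := (Finset.univ : Finset (Fin d)).piAntidiag k with hW
  have hmem : ∀ h ∈ W, ∑ j, h j = k := by
    intro h hh
    rw [hW, Finset.mem_piAntidiag] at hh
    exact hh.1
  have hle : ∀ h ∈ W, h i0 ≤ k := by
    intro h hh
    rw [← hmem h hh]
    exact Finset.single_le_sum (fun j _ => Nat.zero_le _) (mem_univ i0)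
  have step1 : ∀ h ∈ W, h i0 = ∑ t ∈ Icc 1 k, if t ≤ h i0 then 1 else 0 := by
    intro h hh
    rw [← Finset.card_filter]
    have : (Icc 1 k).filter (fun t => t ≤ h i0) = Icc 1 (h i0) := by
      ext t
      simp only [mem_filter, mem_Icc]
      have := hle h hh
      omega
    rw [this, Nat.card_Icc]
    omega
  rw [Finset.sum_congr rfl step1, Finset.sum_comm]
  have step2 : ∀ t ∈ Icc 1 k,
      (∑ h ∈ W, if t ≤ h i0 then 1 else 0) = (k - t + c).choose c := by
    intro t ht
    rw [mem_Icc] at ht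
    rw [← Finset.card_filter, ← card_pa (k - t)]
    apply Finset.card_nbij' (fun h => Function.update h i0 (h i0 - t))
      (fun h => Function.update h i0 (h i0 + t))
    · intro h hh
      rw [Finset.mem_coe] at hh ⊢
      rw [mem_filter] at hh
      rw [Finset.mem_piAntidiag]
      refine ⟨?_, fun i _ => mem_univ i⟩
      rw [hsum_split i0, Function.update_self]
      have h1 := hmem h hh.1
      rw [hsum_split i0] at h1
      have h2 : ∑ j ∈ univ.erase i0, Function.update h i0 (h i0 - t) j
          = ∑ j ∈ univ.erase i0, h j := by
        apply Finset.sum_congr rfl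
        intro j hj
        rw [Function.update_of_ne (Finset.ne_of_mem_erase hj)]
      rw [h2]
      have := hh.2
      omega
    · intro h hh
      rw [Finset.mem_coe] at hh ⊢; dsimp only
      rw [Finset.mem_piAntidiag] at hh
      rw [mem_filter]
      constructor
      · rw [hW, Finset.mem_piAntidiag]
        refine ⟨?_, fun i _ => mem_univ i⟩
        rw [hsum_split i0, Function.update_self]
        have h1 := hh.1
        rw [hsum_split i0] at h1
        have h2 : ∑ j ∈ univ.erase i0, Function.update h i0 (h i0 + t) j
            = ∑ j ∈ univ.erase i0, h j := by
          apply Finset.sum_congr rfl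
          intro j hj
          rw [Function.update_of_ne (Finset.ne_of_mem_erase hj)]
        rw [h2]
        omega
      · rw [Function.update_self]; omega
    · intro h hh
      rw [Finset.mem_coe] at hh; dsimp only
      rw [mem_filter] at hh
      rw [Function.update_idem, Function.update_self, Nat.sub_add_cancel hh.2,
        Function.update_eq_self]
    · intro h _
      dsimp only
      rw [Function.update_idem, Function.update_self, Nat.add_sub_cancel,
        Function.update_eq_self]
  rw [Finset.sum_congr rfl step2]
  rcases Nat.eq_zero_or_pos k with rfl | hk
  · simp [Nat.choose_eq_zero_of_lt (Nat.lt_succ_self c)]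
  · obtain ⟨m, rfl⟩ : ∃ m, k = m + 1 := ⟨k - 1, by omega⟩
    have : ∑ t ∈ Icc 1 (m+1), (m + 1 - t + c).choose c
        = ∑ u ∈ range (m+1), (u + c).choose c := by
      apply Finset.sum_nbij' (fun t => m + 1 - t) (fun u => m + 1 - u)
      · intro t ht; rw [mem_Icc] at ht; rw [mem_range]; omega
      · intro u hu; rw [mem_range] at hu; rw [mem_Icc]; omega
      · intro t ht; rw [mem_Icc] at ht; omega
      · intro u hu; rw [mem_range] at hu; omega
      · intro t _; rfl
    rw [this, hockey m c]
    congr 1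
    omega

section Machinery
variable {d : ℕ} (i0 : Fin d) (M : ℕ)

def sTail (f : Fin d → ℕ) : ℕ := ∑ j ∈ univ.erase i0, f j

lemma sTail_add (f g : Fin d → ℕ) : sTail i0 (f + g) = sTail i0 f + sTail i0 g := by
  simp [sTail, Finset.sum_add_distrib]

lemma sTail_zero : sTail i0 (0 : Fin d → ℕ) = 0 := by simp [sTail]

lemma sTail_update (f : Fin d → ℕ) (v : ℕ) : sTail i0 (Function.update f i0 v) = sTail i0 f := by
  apply Finset.sum_congr rfl
  intro j hj
  rw [Function.update_of_ne (Finset.ne_of_mem_erase hj)]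

lemma sTail_update_ne (f : Fin d → ℕ) {j : Fin d} (hj : j ≠ i0) (v : ℕ) :
    sTail i0 (Function.update f j v) + f j = sTail i0 f + v := by
  have hjm : j ∈ univ.erase i0 := Finset.mem_erase.mpr ⟨hj, mem_univ j⟩
  unfold sTail
  rw [Finset.sum_update_of_mem hjm, ← Finset.add_sum_erase _ f hjm,
    Finset.sdiff_singleton_eq_erase]
  omega

lemma le_sTail (f : Fin d → ℕ) {j : Fin d} (hj : j ≠ i0) : f j ≤ sTail i0 f :=
  Finset.single_le_sum (f := f) (fun i _ => Nat.zero_le _)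
    (Finset.mem_erase.mpr ⟨hj, mem_univ j⟩)

def TT (k : ℕ) : Finset (Fin d → ℕ) :=
  (Finset.Icc 0 (fun _ => k * M)).filter
    (fun f => sTail i0 f ≤ k ∧ f i0 ≤ (k - sTail i0 f) * M)

lemma mem_TT (hM : 1 ≤ M) {k : ℕ} {f : Fin d → ℕ} :
    f ∈ TT i0 M k ↔ sTail i0 f ≤ k ∧ f i0 ≤ (k - sTail i0 f) * M := by
  rw [TT, mem_filter, and_iff_right_iff_imp]
  rintro ⟨h1, h2⟩
  rw [Finset.mem_Icc]
  refine ⟨fun j => Nat.zero_le _, fun j => ?_⟩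
  by_cases hj : j = i0
  · subst hj
    exact h2.trans (Nat.mul_le_mul_right M (Nat.sub_le k _))
  · calc f j ≤ sTail i0 f := le_sTail i0 f hj
      _ ≤ k := h1
      _ ≤ k * M := Nat.le_mul_of_pos_right k hM

lemma TT_add (hM : 1 ≤ M) (k : ℕ) : TT i0 M (k + 1) = TT i0 M k + TT i0 M 1 := by
  ext f
  rw [Finset.mem_add]
  constructor
  · intro hf
    rw [mem_TT i0 M hM] at hf
    obtain ⟨hs, hv⟩ := hf
    by_cases hsk : sTail i0 f = k + 1
    · -- all budget used in tail; f i0 = 0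
      have hfi0 : f i0 = 0 := by
        rw [hsk, Nat.sub_self, Nat.zero_mul] at hv
        omega
      have : ∃ j ∈ univ.erase i0, f j ≠ 0 := by
        apply Finset.exists_ne_zero_of_sum_ne_zero
        show sTail i0 f ≠ 0
        omega
      obtain ⟨j, hjm, hjne⟩ := this
      have hji0 : j ≠ i0 := (Finset.mem_erase.mp hjm).1
      refine ⟨Function.update f j (f j - 1), ?_, Function.update 0 j 1, ?_, ?_⟩
      · rw [mem_TT i0 M hM]
        have h1 := sTail_update_ne i0 f hji0 (f j - 1)
        have h2 : sTail i0 (Function.update f j (f j - 1)) = k := by omega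
        rw [h2]
        constructor
        · omega
        · rw [Function.update_of_ne (Ne.symm hji0)]
          omega
      · rw [mem_TT i0 M hM]
        have h1 := sTail_update_ne i0 (0 : Fin d → ℕ) hji0 1
        rw [sTail_zero] at h1
        simp only [Pi.zero_apply] at h1
        constructor
        · omega
        · rw [Function.update_of_ne (Ne.symm hji0)]
          simp
      · funext i
        by_cases hij : i = j
        · subst hij
          simp only [Pi.add_apply, Function.update_self]
          omega
        · simp [Function.update_of_ne hij]
    · -- sTail ≤ k
      have hsk' : sTail i0 f ≤ k := by omega
      by_cases hv' : f i0 ≤ (k - sTail i0 f) * M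
      · exact ⟨f, (mem_TT i0 M hM).mpr ⟨hsk', hv'⟩, 0,
          (mem_TT i0 M hM).mpr (by simp [sTail_zero]), (add_zero f)⟩
      · push_neg at hv'
        set s := sTail i0 f with hsdef
        have hm : f i0 - (k - s) * M ≤ M := by
          have : (k + 1 - s) * M = (k - s) * M + M := by
            rw [show k + 1 - s = (k - s) + 1 from by omega, Nat.add_mul, Nat.one_mul]
          omega
        refine ⟨Function.update f i0 ((k - s) * M), ?_,
          Function.update 0 i0 (f i0 - (k - s) * M), ?_, ?_⟩
        · rw [mem_TT i0 M hM, sTail_update]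
          exact ⟨hsk', by rw [Function.update_self]⟩
        · rw [mem_TT i0 M hM, sTail_update, sTail_zero]
          refine ⟨Nat.zero_le _, ?_⟩
          rw [Function.update_self]
          simpa using hm
        · funext i
          by_cases hij : i = i0
          · subst hij
            simp only [Pi.add_apply, Function.update_self]
            omega
          · simp [Function.update_of_ne hij]
  · rintro ⟨y, hy, z, hz, rfl⟩
    rw [mem_TT i0 M hM] at hy hz ⊢
    rw [sTail_add]
    obtain ⟨hy1, hy2⟩ := hy
    obtain ⟨hz1, hz2⟩ := hz
    refine ⟨by omega, ?_⟩
    have : (k - sTail i0 y) * M + (1 - sTail i0 z) * M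
        = (k + 1 - (sTail i0 y + sTail i0 z)) * M := by
      rw [← Nat.add_mul]
      congr 1
      omega
    calc (y + z) i0 = y i0 + z i0 := rfl
      _ ≤ (k - sTail i0 y) * M + (1 - sTail i0 z) * M := Nat.add_le_add hy2 hz2
      _ = (k + 1 - (sTail i0 y + sTail i0 z)) * M := this

lemma TT_nsmul (hM : 1 ≤ M) : ∀ k, 1 ≤ k → k • TT i0 M 1 = TT i0 M k := by
  intro k
  induction k with
  | zero => omega
  | succ k ih =>
    intro _
    rcases Nat.eq_zero_or_pos k with rfl | hk
    · rw [one_nsmul]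
    · rw [succ_nsmul, ih hk, ← TT_add i0 M hM]

lemma hsum_split' (h : Fin d → ℕ) : ∑ j, h j = h i0 + sTail i0 h :=
  (Finset.add_sum_erase univ h (mem_univ i0)).symm

lemma card_TT (hM : 1 ≤ M) (k : ℕ) :
    (TT i0 M k).card
      = M * (∑ h ∈ (univ : Finset (Fin d)).piAntidiag k, h i0)
        + ((univ : Finset (Fin d)).piAntidiag k).card := by
  classical
  set W := (univ : Finset (Fin d)).piAntidiag k with hW
  have hq : ∀ f ∈ TT i0 M k, Function.update f i0 (k - sTail i0 f) ∈ W := by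
    intro f hf
    rw [mem_TT i0 M hM] at hf
    rw [hW, Finset.mem_piAntidiag]
    refine ⟨?_, fun i _ => mem_univ i⟩
    rw [hsum_split' i0, Function.update_self, sTail_update]
    omega
  rw [Finset.card_eq_sum_card_fiberwise hq]
  have fib : ∀ h ∈ W, ((TT i0 M k).filter
      (fun f => Function.update f i0 (k - sTail i0 f) = h)).card = h i0 * M + 1 := by
    intro h hh
    rw [hW, Finset.mem_piAntidiag] at hh
    have hsum : h i0 + sTail i0 h = k := by rw [← hsum_split' i0]; exact hh.1
    have himg : (TT i0 M k).filter (fun f => Function.update f i0 (k - sTail i0 f) = h)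
        = (Finset.range (h i0 * M + 1)).image (fun v => Function.update h i0 v) := by
      ext f
      simp only [mem_filter, Finset.mem_image, Finset.mem_range]
      constructor
      · rintro ⟨hfT, hqf⟩
        rw [mem_TT i0 M hM] at hfT
        have h1 : ∀ j, j ≠ i0 → h j = f j := by
          intro j hj
          rw [← hqf, Function.update_of_ne hj]
        have h2 : h i0 = k - sTail i0 f := by
          rw [← hqf, Function.update_self]
        refine ⟨f i0, ?_, ?_⟩
        · have := hfT.2
          rw [← h2] at this
          omega
        · funext j
          by_cases hj : j = i0
          · subst hj; rw [Function.update_self]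
          · rw [Function.update_of_ne hj, h1 j hj]
      · rintro ⟨v, hv, rfl⟩
        have hsT : sTail i0 (Function.update h i0 v) = sTail i0 h := sTail_update i0 h v
        have hTm : Function.update h i0 v ∈ TT i0 M k := by
          rw [mem_TT i0 M hM, hsT, Function.update_self]
          constructor
          · omega
          · have : k - sTail i0 h = h i0 := by omega
            rw [this]; omega
        refine ⟨hTm, ?_⟩
        rw [Function.update_idem, hsT]
        have : k - sTail i0 h = h i0 := by omega
        rw [this, Function.update_eq_self]
    rw [himg, Finset.card_image_of_injective _ ?_, Finset.card_range]
    intro a b hab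
    have := congrFun hab i0
    simpa using this
  rw [Finset.sum_congr rfl fib, Finset.sum_add_distrib, ← Finset.sum_mul]
  simp [mul_comm]

lemma single_eq_update (j : Fin d) (v : ℕ) :
    (Pi.single j v : Fin d → ℕ) = Function.update (0 : Fin d → ℕ) j v := rfl

lemma sTail_single_ne {j : Fin d} (hj : j ≠ i0) (v : ℕ) :
    sTail i0 (Pi.single j v : Fin d → ℕ) = v := by
  have := sTail_update_ne i0 (0 : Fin d → ℕ) hj v
  rw [sTail_zero] at this
  simp only [Pi.zero_apply] at this
  rw [single_eq_update]
  omega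

lemma sTail_single_self (v : ℕ) :
    sTail i0 (Pi.single i0 v : Fin d → ℕ) = 0 := by
  rw [single_eq_update, sTail_update, sTail_zero]

def iotaHom (d : ℕ) : (Fin d → ℕ) →+ (Fin d → ℤ) :=
  (Nat.castAddMonoidHom ℤ).compLeft (Fin d)

lemma iotaHom_apply (f : Fin d → ℕ) (j : Fin d) : iotaHom d f j = (f j : ℤ) := rfl

lemma iotaHom_injective : Function.Injective (iotaHom d) := by
  intro f g hfg
  funext j
  exact Nat.cast_injective (congrFun hfg j)

lemma iotaHom_single (j : Fin d) (v : ℕ) :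
    iotaHom d (Pi.single j v) = Pi.single j (v : ℤ) := by
  funext i
  rw [iotaHom_apply]
  by_cases hij : i = j
  · subst hij; rw [Pi.single_eq_same, Pi.single_eq_same]
  · rw [Pi.single_eq_of_ne hij, Pi.single_eq_of_ne hij, Nat.cast_zero]

lemma TT_one_image (hM : 1 ≤ M) :
    (TT i0 M 1).image (iotaHom d)
      = {(0 : Fin d → ℤ)} ∪
        (Finset.univ.filter (fun j : Fin d => j ≠ i0)).image
          (fun j => Pi.single j (1 : ℤ)) ∪
        (Finset.Icc 1 M).image (fun m : ℕ => Pi.single i0 (m : ℤ)) := by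
  ext x
  simp only [Finset.mem_image, Finset.mem_union, Finset.mem_singleton, Finset.mem_filter,
    Finset.mem_univ, true_and, Finset.mem_Icc]
  constructor
  · rintro ⟨f, hf, rfl⟩
    rw [mem_TT i0 M hM] at hf
    obtain ⟨hs, hv⟩ := hf
    rcases Nat.eq_zero_or_pos (sTail i0 f) with hs0 | hs1
    · -- tail is zero
      have hf0 : ∀ j, j ≠ i0 → f j = 0 := by
        intro j hj
        have := le_sTail i0 f hj
        omega
      have hfeq : f = Pi.single i0 (f i0) := by
        funext j
        by_cases hj : j = i0
        · subst hj; rw [Pi.single_eq_same]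
        · rw [Pi.single_eq_of_ne hj]; exact hf0 j hj
      rcases Nat.eq_zero_or_pos (f i0) with hz | hpos
      · left; left
        rw [hfeq, hz]
        simp [iotaHom_single]
      · right
        refine ⟨f i0, ⟨hpos, ?_⟩, ?_⟩
        · rw [hs0] at hv; omega
        · conv_rhs => rw [hfeq]
          rw [iotaHom_single]
    · -- tail is one
      have hse : sTail i0 f = 1 := by omega
      have hfi0 : f i0 = 0 := by
        rw [hse] at hv; simpa using hv
      have : ∃ j ∈ univ.erase i0, f j ≠ 0 := by
        apply Finset.exists_ne_zero_of_sum_ne_zero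
        show sTail i0 f ≠ 0
        omega
      obtain ⟨j, hjm, hjne⟩ := this
      have hji0 : j ≠ i0 := (Finset.mem_erase.mp hjm).1
      have hfj : f j = 1 := by
        have := le_sTail i0 f hji0
        omega
      have hothers : ∀ j', j' ≠ i0 → j' ≠ j → f j' = 0 := by
        intro j' hj'i0 hj'j
        have h1 : f j + ∑ x ∈ (univ.erase i0).erase j, f x = sTail i0 f :=
          Finset.add_sum_erase _ f hjm
        have h2 : f j' ≤ ∑ x ∈ (univ.erase i0).erase j, f x :=
          Finset.single_le_sum (f := f) (fun i _ => Nat.zero_le _)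
            (Finset.mem_erase.mpr ⟨hj'j, Finset.mem_erase.mpr ⟨hj'i0, mem_univ j'⟩⟩)
        omega
      have hfeq : f = Pi.single j 1 := by
        funext j'
        by_cases hj'j : j' = j
        · subst hj'j; rw [Pi.single_eq_same, hfj]
        · rw [Pi.single_eq_of_ne hj'j]
          by_cases hj'i0 : j' = i0
          · subst hj'i0; exact hfi0
          · exact hothers j' hj'i0 hj'j
      left; right
      exact ⟨j, hji0, by rw [hfeq, iotaHom_single, Nat.cast_one]⟩
  · rintro ((rfl | ⟨j, hj, rfl⟩) | ⟨m, ⟨hm1, hm2⟩, rfl⟩)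
    · refine ⟨0, ?_, by simp [iotaHom]⟩
      rw [mem_TT i0 M hM, sTail_zero]
      simp
    · refine ⟨Pi.single j 1, ?_, by rw [iotaHom_single, Nat.cast_one]⟩
      rw [mem_TT i0 M hM, sTail_single_ne i0 hj, Pi.single_eq_of_ne (Ne.symm hj)]
      simp
    · refine ⟨Pi.single i0 m, ?_, by rw [iotaHom_single]⟩
      rw [mem_TT i0 M hM, sTail_single_self, Pi.single_eq_same]
      simpa using hm2

end Machinery


/-- For the long simplex `A_{d,N} = {0, e₂, …, e_d} ∪ {e₁, 2e₁, …, (N-d)e₁} ⊆ ℤ^d`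
one has `|k A_{d,N}| = C(k+d-1, d)(N-d) + C(k+d-1, d-1)`. -/
theorem stmt_15 (k N d : ℕ) (hk : 0 < k) (hd : 0 < d) (hN : d + 1 ≤ N)
    (A : Finset (Fin d → ℤ))
    (hA : A = {(0 : Fin d → ℤ)} ∪
        (Finset.univ.filter (fun j : Fin d => j ≠ ⟨0, hd⟩)).image
          (fun j => Pi.single j (1 : ℤ)) ∪
        (Finset.Icc 1 (N - d)).image (fun m : ℕ => Pi.single (⟨0, hd⟩ : Fin d) (m : ℤ))) :
    (k • A).card = (k + d - 1).choose d * (N - d) + (k + d - 1).choose (d - 1) := by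
  have hM : 1 ≤ N - d := by omega
  have hd1 : d = (d - 1) + 1 := by omega
  have hcard_pa : ∀ n, ((univ : Finset (Fin d)).piAntidiag n).card
      = (n + (d - 1)).choose (d - 1) := by
    intro n
    exact card_pa (d - 1) univ (by rw [Finset.card_univ, Fintype.card_fin]; omega) n
  have hsum := sum_coord (⟨0, hd⟩ : Fin d) (d - 1) k hd1 hcard_pa
  have hAimg : A = (TT (⟨0, hd⟩ : Fin d) (N - d) 1).image (iotaHom d) := by
    rw [hA]
    exact (TT_one_image _ _ hM).symm
  have hksmul : k • A = (TT (⟨0, hd⟩ : Fin d) (N - d) k).image (iotaHom d) := by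
    rw [hAimg, ← Finset.image_nsmul, TT_nsmul _ _ hM k hk]
  rw [hksmul, Finset.card_image_of_injective _ iotaHom_injective,
    card_TT _ _ hM k, hsum, hcard_pa k]
  have e1 : (k + d - 1).choose d = (k + (d - 1)).choose (d - 1 + 1) := by
    clear hA hsum hcard_pa hAimg hksmul A
    congr 1 <;> omega
  have e2 : (k + d - 1).choose (d - 1) = (k + (d - 1)).choose (d - 1) := by
    clear hA hsum hcard_pa hAimg hksmul A
    congr 1
    omega
  rw [e1, e2, mul_comm]
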